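/- arXiv:math/0210325 — 2 statements merged into one kernel-verified Lean document; each statement's English description precedes it below -/
import Mathlib

section
/- Given an exact sequence of finitely generated abelian groups A → B ⊕ D → E → F, where rank(A) ≤ C, rank(F) ≤ C, the map A → D is surjective with kernel of rank ≤ C, and rank(B) = V k^n + O(k^{n-1}), then rank(E) = V k^n + O(k^{n-1}). -/
open Module LinearMap

/-- Rank-nullity for finitely generated modules over ℤ. -/
lemma rn {M N : Type} [AddCommGroup M] [AddCommGroup N] [Module.Finite ℤ M]
    (φ : M →ₗ[ℤ] N) :
    finrank ℤ (LinearMap.range φ) + finrank ℤ (LinearMap.ker φ) = finrank ℤ M := by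
  rw [← LinearEquiv.finrank_eq φ.quotKerEquivRange]
  exact Submodule.finrank_quotient_add_finrank _

lemma key {A B D E F : Type} [AddCommGroup A] [AddCommGroup B] [AddCommGroup D]
    [AddCommGroup E] [AddCommGroup F]
    [Module.Finite ℤ A] [Module.Finite ℤ B] [Module.Finite ℤ D] [Module.Finite ℤ E]
    [Module.Finite ℤ F]
    (f : A →+ B × D) (g : B × D →+ E) (h : E →+ F)
    (hexact₁ : f.range = g.ker) (hexact₂ : g.range = h.ker)
    (hAD : Function.Surjective ((AddMonoidHom.snd B D).comp f)) :
    ∃ u v : ℕ, u ≤ finrank ℤ F ∧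
      v ≤ finrank ℤ ↥((AddMonoidHom.snd B D).comp f).ker ∧
      finrank ℤ E + v = finrank ℤ B + u := by
  have : IsNoetherian ℤ A := isNoetherian_of_isNoetherianRing_of_finite ℤ A
  set f' := f.toIntLinearMap
  set g' := g.toIntLinearMap
  set h' := h.toIntLinearMap
  set s' := ((AddMonoidHom.snd B D).comp f).toIntLinearMap with hs'
  set S := LinearMap.range f' with hS
  have hSfin : Module.Finite ℤ S := inferInstance
  -- φ : S →ₗ D, restriction of snd
  set φ : S →ₗ[ℤ] D := (LinearMap.snd ℤ B D).comp S.subtype with hφ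
  have hφsurj : Function.Surjective φ := by
    intro d
    obtain ⟨a, ha⟩ := hAD d
    exact ⟨⟨f' a, ⟨a, rfl⟩⟩, ha⟩
  have hs'surj : Function.Surjective s' := hAD
  -- exactness as submodules
  have hker_g : LinearMap.ker g' = S := by
    ext x
    have hx := SetLike.ext_iff.mp hexact₁ x
    simp only [AddMonoidHom.mem_range, AddMonoidHom.mem_ker] at hx
    rw [LinearMap.mem_ker, hS, LinearMap.mem_range]
    exact hx.symm
  have hker_h : LinearMap.ker h' = LinearMap.range g' := by
    ext x
    have hx := SetLike.ext_iff.mp hexact₂ x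
    simp only [AddMonoidHom.mem_range, AddMonoidHom.mem_ker] at hx
    rw [LinearMap.mem_ker, LinearMap.mem_range]
    exact hx.symm
  -- kernels of s'
  have hkerseq : finrank ℤ ↥((AddMonoidHom.snd B D).comp f).ker
      = finrank ℤ (LinearMap.ker s') := by
    refine LinearEquiv.finrank_eq (AddEquiv.toIntLinearEquiv ?_)
    exact AddEquiv.mk ⟨fun x => ⟨x.1, x.2⟩, fun x => ⟨x.1, x.2⟩, fun x => rfl, fun x => rfl⟩
      (fun x y => rfl)
  -- numeric equations
  have eprod : finrank ℤ (B × D) = finrank ℤ B + finrank ℤ D := by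
    have h1 := rn (LinearMap.snd ℤ B D)
    rw [LinearMap.range_eq_top.mpr (fun d => ⟨(0, d), rfl⟩), finrank_top] at h1
    have e : B ≃ₗ[ℤ] LinearMap.ker (LinearMap.snd ℤ B D) :=
      { toFun := fun b => ⟨(b, 0), rfl⟩
        invFun := fun x => x.1.1
        map_add' := fun a b => by ext <;> simp
        map_smul' := fun c b => by ext <;> simp
        left_inv := fun b => rfl
        right_inv := fun x => Subtype.ext (Prod.ext_iff.mpr ⟨rfl, x.2.symm⟩) }
    rw [← e.finrank_eq] at h1
    omega
  have e1 : finrank ℤ (LinearMap.range g') + finrank ℤ S = finrank ℤ B + finrank ℤ D := by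
    rw [← hker_g, rn g', eprod]
  have e2 : finrank ℤ E = finrank ℤ (LinearMap.range h') + finrank ℤ (LinearMap.range g') := by
    rw [← hker_h, rn h']
  have e3 : finrank ℤ D + finrank ℤ (LinearMap.ker φ) = finrank ℤ S := by
    have := rn φ
    rwa [LinearMap.range_eq_top.mpr hφsurj, finrank_top] at this
  have e4 : finrank ℤ A = finrank ℤ S + finrank ℤ (LinearMap.ker f') := rn f' |>.symm
  have e5 : finrank ℤ D + finrank ℤ (LinearMap.ker s') = finrank ℤ A := by
    have := rn s'
    rwa [LinearMap.range_eq_top.mpr hs'surj, finrank_top] at this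
  refine ⟨finrank ℤ (LinearMap.range h'), finrank ℤ (LinearMap.ker φ),
    Submodule.finrank_le _, ?_, by omega⟩
  rw [hkerseq]; omega


/-- Given, for each `k`, an exact sequence of finitely generated
abelian groups `A_k → B_k ⊕ D_k → E_k → F_k`, where `rank A_k ≤ C`,
`rank F_k ≤ C`, the induced map `A_k → D_k` is surjective with kernel of rank
`≤ C`, and `rank B_k = V k^n + O(k^(n-1))`, then
`rank E_k = V k^n + O(k^(n-1))`.  Here rank is torsion-free rank, i.e.
`Module.finrank` over `ℤ`. -/
theorem stmt1 (n : ℕ) (hn : 1 ≤ n) (V C : ℝ) (hV : 0 < V)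
    (A B D E F : ℕ → Type) [∀ k, AddCommGroup (A k)] [∀ k, AddCommGroup (B k)]
    [∀ k, AddCommGroup (D k)] [∀ k, AddCommGroup (E k)] [∀ k, AddCommGroup (F k)]
    [∀ k, Module.Finite ℤ (A k)] [∀ k, Module.Finite ℤ (B k)]
    [∀ k, Module.Finite ℤ (D k)] [∀ k, Module.Finite ℤ (E k)]
    [∀ k, Module.Finite ℤ (F k)]
    (f : ∀ k, A k →+ B k × D k) (g : ∀ k, B k × D k →+ E k) (h : ∀ k, E k →+ F k)
    (hexact₁ : ∀ k, (f k).range = (g k).ker)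
    (hexact₂ : ∀ k, (g k).range = (h k).ker)
    (hA : ∀ k, (Module.finrank ℤ (A k) : ℝ) ≤ C)
    (hF : ∀ k, (Module.finrank ℤ (F k) : ℝ) ≤ C)
    (hAD : ∀ k, Function.Surjective ((AddMonoidHom.snd (B k) (D k)).comp (f k)))
    (hADker : ∀ k,
      (Module.finrank ℤ ↥((AddMonoidHom.snd (B k) (D k)).comp (f k)).ker : ℝ) ≤ C)
    (hB : ∀ k : ℕ, 1 ≤ k →
      |(Module.finrank ℤ (B k) : ℝ) - V * (k : ℝ) ^ n| ≤ C * (k : ℝ) ^ (n - 1)) :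
    ∃ C' : ℝ, ∀ k : ℕ, 1 ≤ k →
      |(Module.finrank ℤ (E k) : ℝ) - V * (k : ℝ) ^ n| ≤ C' * (k : ℝ) ^ (n - 1) := by
  refine ⟨3 * C, fun k hk => ?_⟩
  obtain ⟨u, v, hu, hv, heq⟩ := key (f k) (g k) (h k) (hexact₁ k) (hexact₂ k) (hAD k)
  have hC0 : (0 : ℝ) ≤ C := le_trans (by positivity) (hA 0)
  have hk1 : (1 : ℝ) ≤ (k : ℝ) ^ (n - 1) := by
    have : (1 : ℝ) ≤ (k : ℝ) := by exact_mod_cast hk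
    exact one_le_pow₀ this
  have hCp : C ≤ C * (k : ℝ) ^ (n - 1) := le_mul_of_one_le_right hC0 hk1
  have hu' : (u : ℝ) ≤ C := le_trans (by exact_mod_cast hu) (hF k)
  have hv' : (v : ℝ) ≤ C := le_trans (by exact_mod_cast hv) (hADker k)
  have hu0 : (0 : ℝ) ≤ (u : ℝ) := Nat.cast_nonneg u
  have hv0 : (0 : ℝ) ≤ (v : ℝ) := Nat.cast_nonneg v
  have heq' : (Module.finrank ℤ (E k) : ℝ) + v = Module.finrank ℤ (B k) + u := by
    exact_mod_cast heq
  have hBk := hB k hk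
  rw [abs_le] at hBk ⊢
  constructor <;> [linarith [hBk.1, hBk.2]; linarith [hBk.1, hBk.2]]
end

section
/- The space of nondegenerate complex quadratic forms on ℂ^n is path-connected; moreover, any two nondegenerate quadratic forms h_0, h_1 can be joined by a path h_t of nondegenerate quadratic forms whose operator norms and smallest singular values are bounded in terms of those of h_0 and h_1. -/
set_option maxHeartbeats 1000000

noncomputable section Stmt3Aux

open Matrix Complex in
/-- squared ℓ² norm of a complex vector -/
def qn {n : ℕ} (v : Fin n → ℂ) : ℝ := ∑ i, ‖v i‖ ^ 2

namespace Stmt3Aux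

open Matrix Complex
open scoped ComplexOrder

variable {n : ℕ}

lemma qn_nonneg (v : Fin n → ℂ) : 0 ≤ qn v :=
  Finset.sum_nonneg fun _ _ => sq_nonneg _

lemma dot_self (v : Fin n → ℂ) : dotProduct (star v) v = (qn v : ℂ) := by
  simp only [dotProduct, qn, Pi.star_apply]
  push_cast
  refine Finset.sum_congr rfl fun i _ => ?_
  rw [Complex.star_def, mul_comm, Complex.mul_conj']

lemma qn_mulVec_eq {A : Matrix (Fin n) (Fin n) ℂ} (hA : Aᴴ * A = 1) (v : Fin n → ℂ) :
    qn (A *ᵥ v) = qn v := by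
  have : ((qn (A *ᵥ v) : ℂ)) = (qn v : ℂ) := by
    rw [← dot_self, ← dot_self, Matrix.star_mulVec, Matrix.dotProduct_mulVec,
      Matrix.vecMul_vecMul, hA, Matrix.vecMul_one]
  exact_mod_cast this

lemma qn_mulVec_diagonal (d : Fin n → ℂ) (v : Fin n → ℂ) :
    qn ((Matrix.diagonal d) *ᵥ v) = ∑ i, ‖d i‖ ^ 2 * ‖v i‖ ^ 2 := by
  simp only [qn, Matrix.mulVec_diagonal, norm_mul, mul_pow]

lemma sq_norm_le_qn (v : Fin n → ℂ) : ‖v‖ ^ 2 ≤ qn v := by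
  rcases isEmpty_or_nonempty (Fin n) with h | h
  · have : v = 0 := Subsingleton.elim _ _
    simp [this, qn]
  · obtain ⟨i, hi⟩ := Finite.exists_max (fun i => ‖v i‖)
    have h1 : ‖v‖ ≤ ‖v i‖ := pi_norm_le_iff_of_nonneg (norm_nonneg _) |>.2 hi
    calc ‖v‖ ^ 2 ≤ ‖v i‖ ^ 2 := by
          have := norm_nonneg v
          nlinarith
      _ ≤ qn v := Finset.single_le_sum (f := fun j => ‖v j‖ ^ 2)
          (fun j _ => sq_nonneg _) (Finset.mem_univ i)

lemma qn_le_sq_norm (v : Fin n → ℂ) : qn v ≤ n * ‖v‖ ^ 2 := by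
  calc qn v ≤ ∑ _i : Fin n, ‖v‖ ^ 2 := by
        refine Finset.sum_le_sum fun i _ => ?_
        have h1 : ‖v i‖ ≤ ‖v‖ := norm_le_pi_norm v i
        have := norm_nonneg (v i)
        nlinarith
    _ = n * ‖v‖ ^ 2 := by simp [Finset.sum_const]


def toE (v : Fin n → ℂ) : EuclideanSpace ℂ (Fin n) := (WithLp.equiv 2 _).symm v

lemma norm_toE_sq (v : Fin n → ℂ) : ‖toE v‖ ^ 2 = qn v := by
  rw [EuclideanSpace.norm_eq]
  rw [Real.sq_sqrt (Finset.sum_nonneg fun _ _ => sq_nonneg _)]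
  rfl

lemma norm_toE_eq_of_qn {v w : Fin n → ℂ} (h : qn v = qn w) : ‖toE v‖ = ‖toE w‖ := by
  have h2 : ‖toE v‖ ^ 2 = ‖toE w‖ ^ 2 := by rw [norm_toE_sq, norm_toE_sq, h]
  have := norm_nonneg (toE v); have := norm_nonneg (toE w)
  nlinarith

lemma lin_comb_mulVec_ne_zero {Z : Matrix (Fin n) (Fin n) ℂ} (hZu : Zᴴ * Z = 1)
    {a b : ℂ} (hab : ‖b‖ < ‖a‖) {v : Fin n → ℂ} (hv : v ≠ 0) :
    (a • (1 : Matrix (Fin n) (Fin n) ℂ) + b • Z) *ᵥ v ≠ 0 := by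
  intro hzero
  have hexp : a • v + b • (Z *ᵥ v) = 0 := by
    simpa [Matrix.add_mulVec, Matrix.smul_mulVec, Matrix.one_mulVec] using hzero
  have hav : a • v = -(b • (Z *ᵥ v)) := by
    rw [eq_neg_iff_add_eq_zero]; exact hexp
  have h1 : ‖toE (a • v)‖ = ‖toE (-(b • (Z *ᵥ v)))‖ := by rw [hav]
  have htoE1 : toE (a • v) = a • toE v := rfl
  have htoE2 : toE (-(b • (Z *ᵥ v))) = -(b • toE (Z *ᵥ v)) := rfl
  rw [htoE1, htoE2, norm_neg, norm_smul, norm_smul,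
    norm_toE_eq_of_qn (qn_mulVec_eq hZu v)] at h1
  have hvE : ‖toE v‖ ≠ 0 := by
    simp only [ne_eq, norm_eq_zero]
    intro h0
    exact hv ((WithLp.equiv 2 _).symm.injective h0)
  have : ‖a‖ = ‖b‖ := mul_right_cancel₀ hvE h1
  linarith [hab]

lemma det_ne_zero_of_mulVec {A : Matrix (Fin n) (Fin n) ℂ}
    (h : ∀ v ≠ 0, A *ᵥ v ≠ 0) : A.det ≠ 0 := by
  intro hdet
  obtain ⟨v, hv, hAv⟩ := (Matrix.exists_mulVec_eq_zero_iff).2 hdet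
  exact h v hv hAv

/-- Cayley-type path from `1` to a symmetric unitary matrix `Z` with `1 + Z` invertible,
through symmetric unitary matrices. -/
lemma cayley {Z : Matrix (Fin n) (Fin n) ℂ} (hZs : Zᵀ = Z) (hZu : Zᴴ * Z = 1)
    (h0 : (1 + Z).det ≠ 0) :
    ∃ γ : Path (1 : Matrix (Fin n) (Fin n) ℂ) Z,
      ∀ x ∈ Set.range γ, xᵀ = x ∧ x.det ≠ 0 ∧ (∀ v, qn (x *ᵥ v) = qn v) := by
  classical
  set N : ℝ → Matrix (Fin n) (Fin n) ℂ :=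
    fun t => ((1 - t : ℝ) : ℂ) • 1 + ((1 + t : ℝ) : ℂ) • Z with hN
  set D : ℝ → Matrix (Fin n) (Fin n) ℂ :=
    fun t => ((1 + t : ℝ) : ℂ) • 1 + ((1 - t : ℝ) : ℂ) • Z with hD
  have hDdet : ∀ t : ℝ, 0 ≤ t → t ≤ 1 → (D t).det ≠ 0 := by
    intro t ht0 ht1
    rcases eq_or_lt_of_le ht0 with h | h
    · have : D t = 1 + Z := by
        simp [hD, ← h]
      rw [this]; exact h0
    · refine det_ne_zero_of_mulVec fun v hv => ?_
      refine lin_comb_mulVec_ne_zero hZu ?_ hv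
      simp only [Complex.norm_real, Real.norm_eq_abs]
      rw [_root_.abs_of_nonneg (by linarith : (0:ℝ) ≤ 1 - t),
        _root_.abs_of_nonneg (by linarith : (0:ℝ) ≤ 1 + t)]
      linarith
  have hNstar : ∀ t : ℝ, (N t)ᴴ = ((1 - t : ℝ) : ℂ) • 1 + ((1 + t : ℝ) : ℂ) • Zᴴ := by
    intro t
    simp [hN, Matrix.conjTranspose_add, Matrix.conjTranspose_smul, Complex.star_def,
      Complex.conj_ofReal]
  have hDstar : ∀ t : ℝ, (D t)ᴴ = ((1 + t : ℝ) : ℂ) • 1 + ((1 - t : ℝ) : ℂ) • Zᴴ := by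
    intro t
    simp [hD, Matrix.conjTranspose_add, Matrix.conjTranspose_smul, Complex.star_def,
      Complex.conj_ofReal]
  have expand : ∀ (a b c d : ℂ) (Y W : Matrix (Fin n) (Fin n) ℂ),
      (a • 1 + b • Y) * (c • 1 + d • W)
        = (a * c) • 1 + (a * d) • W + (b * c) • Y + (b * d) • (Y * W) := by
    intro a b c d Y W
    simp only [add_mul, mul_add, smul_mul_assoc, mul_smul_comm, smul_smul,
      Matrix.one_mul, Matrix.mul_one, smul_add]
    module
  have hkey : ∀ t : ℝ, (N t)ᴴ * N t = (D t)ᴴ * D t := by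
    intro t
    rw [hNstar, hDstar]
    show (_ • (1 : Matrix (Fin n) (Fin n) ℂ) + _ • Zᴴ) * (_ • 1 + _ • Z) = _
    rw [expand, expand, hZu]
    rw [show ((1 - t : ℝ) : ℂ) * ((1 + t : ℝ) : ℂ) = ((1 + t : ℝ) : ℂ) * ((1 - t : ℝ) : ℂ)
      from mul_comm _ _]
    module
  have hcomm : ∀ t : ℝ, N t * D t = D t * N t := by
    intro t
    show (_ • (1 : Matrix (Fin n) (Fin n) ℂ) + _ • Z) * (_ • 1 + _ • Z) = _
    rw [expand, expand]
    module
  set C : ℝ → Matrix (Fin n) (Fin n) ℂ := fun t => N t * (D t)⁻¹ with hC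
  have hCu : ∀ t : ℝ, 0 ≤ t → t ≤ 1 → (C t)ᴴ * C t = 1 := by
    intro t ht0 ht1
    have hdet := hDdet t ht0 ht1
    have hdetH : ((D t)ᴴ).det ≠ 0 := by
      rw [Matrix.det_conjTranspose]
      simpa using hdet
    calc (C t)ᴴ * C t = ((D t)ᴴ)⁻¹ * ((N t)ᴴ * N t) * (D t)⁻¹ := by
          rw [hC]
          rw [Matrix.conjTranspose_mul, Matrix.conjTranspose_nonsing_inv]
          noncomm_ring
      _ = ((D t)ᴴ)⁻¹ * ((D t)ᴴ * D t) * (D t)⁻¹ := by rw [hkey]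
      _ = (((D t)ᴴ)⁻¹ * (D t)ᴴ) * (D t * (D t)⁻¹) := by noncomm_ring
      _ = 1 := by
          rw [Matrix.nonsing_inv_mul _ (isUnit_iff_ne_zero.mpr hdetH), Matrix.mul_nonsing_inv _ (isUnit_iff_ne_zero.mpr hdet)]
          simp
  have hCdet : ∀ t : ℝ, 0 ≤ t → t ≤ 1 → (C t).det ≠ 0 := by
    intro t ht0 ht1
    have := hCu t ht0 ht1
    have h1 : ((C t)ᴴ).det * (C t).det = 1 := by
      rw [← Matrix.det_mul, this, Matrix.det_one]
    intro h
    rw [h, mul_zero] at h1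
    exact zero_ne_one h1
  have hCsym : ∀ t : ℝ, 0 ≤ t → t ≤ 1 → (C t)ᵀ = C t := by
    intro t ht0 ht1
    have hdet := hDdet t ht0 ht1
    have hNt : (N t)ᵀ = N t := by
      simp [hN, Matrix.transpose_add, Matrix.transpose_smul, hZs]
    have hDt : (D t)ᵀ = D t := by
      simp [hD, Matrix.transpose_add, Matrix.transpose_smul, hZs]
    have : (C t)ᵀ = (D t)⁻¹ * N t := by
      rw [hC, Matrix.transpose_mul, Matrix.transpose_nonsing_inv, hDt, hNt]
    rw [this, hC]
    calc (D t)⁻¹ * N t = (D t)⁻¹ * N t * (D t * (D t)⁻¹) := by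
          rw [Matrix.mul_nonsing_inv _ (isUnit_iff_ne_zero.mpr hdet), Matrix.mul_one]
      _ = (D t)⁻¹ * (N t * D t) * (D t)⁻¹ := by noncomm_ring
      _ = (D t)⁻¹ * (D t * N t) * (D t)⁻¹ := by rw [hcomm]
      _ = ((D t)⁻¹ * D t) * (N t * (D t)⁻¹) := by noncomm_ring
      _ = N t * (D t)⁻¹ := by rw [Matrix.nonsing_inv_mul _ (isUnit_iff_ne_zero.mpr hdet), Matrix.one_mul]
  -- continuity
  have hNcont : Continuous N := by
    apply Continuous.add
    · exact ((Complex.continuous_ofReal.comp (by continuity)).smul continuous_const)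
    · exact ((Complex.continuous_ofReal.comp (by continuity)).smul continuous_const)
  have hDcont : Continuous D := by
    apply Continuous.add
    · exact ((Complex.continuous_ofReal.comp (by continuity)).smul continuous_const)
    · exact ((Complex.continuous_ofReal.comp (by continuity)).smul continuous_const)
  have hCcont : Continuous fun t : unitInterval => C (t : ℝ) := by
    have hinv : ∀ t : unitInterval, (D (t : ℝ))⁻¹
        = ((D (t : ℝ)).det)⁻¹ • (D (t : ℝ)).adjugate := by
      intro t
      rw [Matrix.inv_def, Ring.inverse_eq_inv']
    have : Continuous fun t : unitInterval =>
        (N (t : ℝ)) * (((D (t : ℝ)).det)⁻¹ • (D (t : ℝ)).adjugate) := by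
      refine Continuous.matrix_mul (hNcont.comp continuous_subtype_val) ?_
      refine Continuous.smul (f := fun t : unitInterval => ((D (t : ℝ)).det)⁻¹)
        (g := fun t : unitInterval => (D (t : ℝ)).adjugate) ?_ ?_
      · exact ((hDcont.comp continuous_subtype_val).matrix_det).inv₀
          fun t => hDdet t t.2.1 t.2.2
      · exact (hDcont.comp continuous_subtype_val).matrix_adjugate
    convert this using 2 with t
    show N (t : ℝ) * (D (t : ℝ))⁻¹ = _
    rw [hinv t]
  have hC0 : C 0 = 1 := by
    have h00 : N 0 = D 0 := by norm_num [hN, hD]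
    show N 0 * (D 0)⁻¹ = 1
    rw [h00, Matrix.mul_nonsing_inv _ (isUnit_iff_ne_zero.mpr (hDdet 0 le_rfl zero_le_one))]
  have hC1 : C 1 = Z := by
    have hN1 : N 1 = (2 : ℂ) • Z := by norm_num [hN]
    have hD1 : D 1 = (2 : ℂ) • (1 : Matrix (Fin n) (Fin n) ℂ) := by norm_num [hD]
    have hD1inv : (D 1)⁻¹ = ((2 : ℂ)⁻¹) • (1 : Matrix (Fin n) (Fin n) ℂ) := by
      apply Matrix.inv_eq_right_inv
      rw [hD1, smul_mul_assoc, mul_smul_comm, smul_smul]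
      norm_num
    show N 1 * (D 1)⁻¹ = Z
    rw [hN1, hD1inv, smul_mul_assoc, mul_smul_comm, smul_smul]
    norm_num
  refine ⟨⟨⟨fun t => C (t : ℝ), hCcont⟩, by simpa using hC0, by simpa using hC1⟩,
    ?_⟩
  rintro x ⟨t, rfl⟩
  exact ⟨hCsym t t.2.1 t.2.2, hCdet t t.2.1 t.2.2,
    fun v => qn_mulVec_eq (hCu t t.2.1 t.2.2) v⟩


lemma qn_pos {v : Fin n → ℂ} (hv : v ≠ 0) : 0 < qn v := by
  have h1 : 0 < ‖v‖ := norm_pos_iff.mpr hv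
  have := sq_norm_le_qn v
  nlinarith

lemma qn_smul (c : ℂ) (v : Fin n → ℂ) : qn (c • v) = ‖c‖ ^ 2 * qn v := by
  simp [qn, norm_smul, mul_pow, Finset.mul_sum]

lemma ctt {m k : ℕ} (A : Matrix (Fin m) (Fin k) ℂ) : (Aᵀ)ᴴ = (Aᴴ)ᵀ := by
  ext i j
  simp [Matrix.conjTranspose_apply]

lemma conjconj {m : ℕ} (A B : Matrix (Fin m) (Fin m) ℂ) :
    ((A * B)ᵀ)ᴴ = (Aᵀ)ᴴ * (Bᵀ)ᴴ := by
  rw [Matrix.transpose_mul, Matrix.conjTranspose_mul]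

lemma le_of_sq_le_sq {a b : ℝ} (ha : 0 ≤ a) (hb : 0 ≤ b) (hab : a ^ 2 ≤ b ^ 2) : a ≤ b := by
  nlinarith

lemma star_ofReal_vec (d : Fin n → ℝ) :
    star (fun i => ((d i : ℝ) : ℂ)) = fun i => ((d i : ℝ) : ℂ) := by
  funext i
  simp [Pi.star_apply, Complex.star_def, Complex.conj_ofReal]

lemma star_ofReal_inv_vec (d : Fin n → ℝ) :
    star (fun i => ((d i : ℝ) : ℂ)⁻¹) = fun i => ((d i : ℝ) : ℂ)⁻¹ := by
  funext i
  simp [Pi.star_apply, Complex.star_def, map_inv₀, Complex.conj_ofReal]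

/-- choose a unit-modulus rotation making `1 + ζ • Z` invertible -/
lemma exists_rot (Z : Matrix (Fin n) (Fin n) ℂ) :
    ∃ α : ℝ, (1 + Complex.exp ((α : ℂ) * Complex.I) • Z).det ≠ 0 := by
  classical
  set Mp : Matrix (Fin n) (Fin n) (Polynomial ℂ) :=
    (1 : Matrix (Fin n) (Fin n) (Polynomial ℂ)) + (Polynomial.X : Polynomial ℂ) • Z.map Polynomial.C with hMp
  set q : Polynomial ℂ := Mp.det with hq
  have heval : ∀ z : ℂ, q.eval z = (1 + z • Z).det := by
    intro z
    have h1 := RingHom.map_det (Polynomial.evalRingHom z) Mp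
    have h2 : Mp.map (Polynomial.evalRingHom z) = 1 + z • Z := by
      ext i j
      rcases eq_or_ne i j with rfl | hij
      · simp [hMp, Matrix.map_apply, Matrix.add_apply, Matrix.smul_apply, Matrix.one_apply_eq,
          smul_eq_mul, mul_comm z (Z i i)]
      · simp [hMp, Matrix.map_apply, Matrix.add_apply, Matrix.smul_apply,
          Matrix.one_apply_ne hij, smul_eq_mul, mul_comm z (Z i j)]
    calc q.eval z = (Polynomial.evalRingHom z) Mp.det := rfl
      _ = (Mp.map (Polynomial.evalRingHom z)).det := h1
      _ = (1 + z • Z).det := by rw [h2]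
  have hq0 : q ≠ 0 := by
    intro h
    have h1 := heval 0
    rw [h] at h1
    simp only [Polynomial.eval_zero, zero_smul, add_zero, Matrix.det_one] at h1
    exact zero_ne_one h1
  have hfin : {z : ℂ | q.IsRoot z}.Finite := Polynomial.finite_setOf_isRoot hq0
  set f : ℝ → ℂ := fun α => Complex.exp ((α : ℂ) * Complex.I) with hf
  have hinj : Set.InjOn f (Set.Ico 0 (2 * Real.pi)) := by
    intro x hx y hy hxy
    rw [hf] at hxy
    simp only at hxy
    rw [Complex.exp_eq_exp_iff_exists_int] at hxy
    obtain ⟨k, hk⟩ := hxy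
    have hI : ((x : ℂ)) * Complex.I = ((y + k * (2 * Real.pi) : ℝ) : ℂ) * Complex.I := by
      rw [hk]; push_cast; ring
    have hxy' : (x : ℝ) = y + k * (2 * Real.pi) := by
      have := mul_right_cancel₀ Complex.I_ne_zero hI
      exact_mod_cast this
    have hπ := Real.pi_pos
    have hk0 : k = 0 := by
      have habs : |(k : ℝ)| < 1 := by
        rw [abs_lt]
        constructor <;> nlinarith [hx.1, hx.2, hy.1, hy.2]
      have : |k| < 1 := by exact_mod_cast habs
      have h2 := abs_lt.mp this
      omega
    rw [hk0] at hxy'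
    push_cast at hxy'
    linarith
  set B := (Set.Ico (0:ℝ) (2 * Real.pi)) ∩ f ⁻¹' {z | q.IsRoot z} with hB
  have hBfin : B.Finite := by
    refine Set.Finite.of_finite_image (hfin.subset ?_) (hinj.mono Set.inter_subset_left)
    rintro z ⟨α, hα, rfl⟩
    exact hα.2
  have hinf : ((Set.Ico (0:ℝ) (2 * Real.pi)) \ B).Infinite :=
    (Set.Ico_infinite (by positivity)).diff hBfin
  obtain ⟨α, hα⟩ := hinf.nonempty
  refine ⟨α, ?_⟩
  rw [← heval]
  intro hroot
  exact hα.2 ⟨hα.1, hroot⟩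

/-- the half path: from a symmetric matrix with invertible determinant to `s • 1`. -/
lemma side {n : ℕ} (hn : 1 ≤ n) (h : Matrix (Fin n) (Fin n) ℂ)
    (hsym : hᵀ = h) (hdet : h.det ≠ 0) (s M m : ℝ)
    (hs : 0 < s) (hM0 : 0 ≤ M) (hMs : M ≤ s) (hms : m ≤ s)
    (hM : ∀ v, ‖h *ᵥ v‖ ≤ M * ‖v‖)
    (hm : ∀ v, m * ‖v‖ ≤ ‖h *ᵥ v‖) :
    ∃ γ : Path h ((s : ℂ) • (1 : Matrix (Fin n) (Fin n) ℂ)),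
      ∀ x ∈ Set.range γ, xᵀ = x ∧ x.det ≠ 0 ∧
        (∀ v, qn (x *ᵥ v) ≤ (n * s) ^ 2 * qn v) ∧
        (0 < m → ∀ v, (m / n) ^ 2 * qn v ≤ qn (x *ᵥ v)) := by
  classical
  have hn' : (1 : ℝ) ≤ (n : ℝ) := by exact_mod_cast hn
  set P : Matrix (Fin n) (Fin n) ℂ := h * hᴴ with hPdef
  -- the key dot product identity
  have hdotP : ∀ x : Fin n → ℂ, dotProduct (star x) (P *ᵥ x) = (qn (hᴴ *ᵥ x) : ℂ) := by
    intro x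
    rw [hPdef, ← Matrix.mulVec_mulVec, Matrix.dotProduct_mulVec]
    have hx : star x ᵥ* h = star (hᴴ *ᵥ x) := by
      rw [Matrix.star_mulVec, Matrix.conjTranspose_conjTranspose]
    rw [hx, dot_self]
  have hHinj : ∀ x : Fin n → ℂ, x ≠ 0 → hᴴ *ᵥ x ≠ 0 := by
    intro x hx hzero
    have hdetH : (hᴴ).det ≠ 0 := by
      rw [Matrix.det_conjTranspose]
      simpa using hdet
    exact hdetH ((Matrix.exists_mulVec_eq_zero_iff).1 ⟨x, hx, hzero⟩)
  have hPherm : P.IsHermitian := Matrix.isHermitian_mul_conjTranspose_self h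
  have hPpos : P.PosDef := by
    refine Matrix.PosDef.of_dotProduct_mulVec_pos hPherm fun x hx => ?_
    rw [hdotP x]
    rw [Complex.zero_lt_real]
    exact qn_pos (hHinj x hx)
  set U : Matrix (Fin n) (Fin n) ℂ :=
    (Matrix.IsHermitian.eigenvectorUnitary hPherm : Matrix (Fin n) (Fin n) ℂ) with hUdef
  have hUmem := (Matrix.IsHermitian.eigenvectorUnitary hPherm).2
  rw [Unitary.mem_iff] at hUmem
  have hU1 : Uᴴ * U = 1 := by
    have := hUmem.1
    rwa [Matrix.star_eq_conjTranspose] at this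
  have hU2 : U * Uᴴ = 1 := by
    have := hUmem.2
    rwa [Matrix.star_eq_conjTranspose] at this
  have hUT : (Uᵀ)ᴴ * Uᵀ = 1 := by
    rw [ctt, ← Matrix.transpose_mul, hU2, Matrix.transpose_one]
  set μ : Fin n → ℝ := hPherm.eigenvalues with hμdef
  have hμpos : ∀ i, 0 < μ i := fun i => hPpos.eigenvalues_pos i
  set D : Matrix (Fin n) (Fin n) ℂ := Matrix.diagonal (fun i => ((μ i : ℝ) : ℂ)) with hDdef
  have hspec : P = U * D * Uᴴ := by
    have := hPherm.spectral_theorem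
    rw [hDdef]
    rw [Unitary.conjStarAlgAut_apply] at this
    exact this
  have hUPU : Uᴴ * P * U = D := by
    rw [hspec, mul_assoc, mul_assoc, hU1, mul_one, ← mul_assoc, hU1, one_mul]
  set K : Matrix (Fin n) (Fin n) ℂ := Uᴴ * h * (Uᴴ)ᵀ with hKdef
  have hKsym : Kᵀ = K := by
    rw [hKdef, Matrix.transpose_mul, Matrix.transpose_mul, Matrix.transpose_transpose, hsym,
      mul_assoc]
  have hKH : Kᴴ = Uᵀ * hᴴ * U := by
    rw [hKdef, Matrix.conjTranspose_mul, Matrix.conjTranspose_mul, ctt (Uᴴ),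
      Matrix.conjTranspose_conjTranspose, ← mul_assoc]
  have hTT1 : (Uᴴ)ᵀ * Uᵀ = 1 := by
    rw [← Matrix.transpose_mul, hU2, Matrix.transpose_one]
  have hTT2 : Uᵀ * (Uᴴ)ᵀ = 1 := by
    rw [← Matrix.transpose_mul, hU1, Matrix.transpose_one]
  have hKKH : K * Kᴴ = D := by
    rw [hKdef, hKH]
    calc Uᴴ * h * (Uᴴ)ᵀ * (Uᵀ * hᴴ * U) = Uᴴ * h * ((Uᴴ)ᵀ * Uᵀ) * hᴴ * U := by
          noncomm_ring
      _ = Uᴴ * (h * hᴴ) * U := by rw [hTT1]; noncomm_ring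
      _ = Uᴴ * P * U := by rw [hPdef]
      _ = D := hUPU
  have hconjP : (Pᵀ)ᴴ = hᴴ * h := by
    rw [hPdef, Matrix.transpose_mul, Matrix.conjTranspose_mul]
    congr 1
    · rw [hsym]
    · rw [ctt (hᴴ), Matrix.conjTranspose_conjTranspose, hsym]
  have hKHK : Kᴴ * K = D := by
    rw [hKdef, hKH]
    calc Uᵀ * hᴴ * U * (Uᴴ * h * (Uᴴ)ᵀ) = Uᵀ * hᴴ * (U * Uᴴ) * h * (Uᴴ)ᵀ := by
          noncomm_ring
      _ = Uᵀ * (hᴴ * h) * (Uᴴ)ᵀ := by rw [hU2]; noncomm_ring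
      _ = Uᵀ * (Pᵀ)ᴴ * (Uᴴ)ᵀ := by rw [hconjP]
      _ = ((Uᴴ * P * U)ᵀ)ᴴ := by
          rw [conjconj (Uᴴ * P) U, conjconj (Uᴴ) P, ctt (Uᴴ), ctt U,
            Matrix.conjTranspose_conjTranspose]
      _ = ((D)ᵀ)ᴴ := by rw [hUPU]
      _ = D := by
          rw [hDdef, Matrix.diagonal_transpose, Matrix.diagonal_conjTranspose,
            star_ofReal_vec]
  have hKD : K * D = D * K := by
    rw [← hKHK, ← mul_assoc, hKKH, hKHK]
  have hKent : ∀ i j, K i j ≠ 0 → μ i = μ j := by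
    intro i j hij
    have := congrFun (congrFun hKD i) j
    rw [hDdef] at this
    rw [show (K * Matrix.diagonal fun i => ((μ i : ℝ) : ℂ)) i j = K i j * ((μ j : ℝ) : ℂ)
      from Matrix.mul_diagonal _ _ _ _] at this
    rw [show (Matrix.diagonal (fun i => ((μ i : ℝ) : ℂ)) * K) i j = ((μ i : ℝ) : ℂ) * K i j
      from Matrix.diagonal_mul _ _ _ _] at this
    have h2 : ((μ j : ℝ) : ℂ) * K i j = ((μ i : ℝ) : ℂ) * K i j := by
      rw [mul_comm]
      exact this
    have h3 := mul_right_cancel₀ hij h2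
    exact_mod_cast h3.symm
  have hcommd : ∀ (A : Matrix (Fin n) (Fin n) ℂ), (∀ i j, A i j ≠ 0 → μ i = μ j) →
      ∀ (φ : ℝ → ℂ), A * Matrix.diagonal (fun i => φ (μ i))
        = Matrix.diagonal (fun i => φ (μ i)) * A := by
    intro A hA φ
    ext i j
    rw [Matrix.mul_diagonal, Matrix.diagonal_mul]
    by_cases hij : A i j = 0
    · rw [hij, zero_mul, mul_zero]
    · rw [hA i j hij, mul_comm]
  have hKentH : ∀ i j, Kᴴ i j ≠ 0 → μ i = μ j := by
    intro i j hij
    rw [Matrix.conjTranspose_apply] at hij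
    have : K j i ≠ 0 := fun hc => hij (by rw [hc, star_zero])
    exact (hKent j i this).symm
  set σ : Fin n → ℝ := fun i => Real.sqrt (μ i) with hσdef
  have hσpos : ∀ i, 0 < σ i := fun i => Real.sqrt_pos.mpr (hμpos i)
  have hσsq : ∀ i, σ i * σ i = μ i := fun i => Real.mul_self_sqrt (hμpos i).le
  set Ω : Matrix (Fin n) (Fin n) ℂ :=
    Matrix.diagonal (fun i => ((σ i : ℝ) : ℂ)⁻¹) * K with hΩdef
  have hinvform : (fun i => ((σ i : ℝ) : ℂ)⁻¹) = fun i => (fun x : ℝ => ((Real.sqrt x : ℝ) : ℂ)⁻¹) (μ i) := rfl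
  have hΩH : Ωᴴ = Kᴴ * Matrix.diagonal (fun i => ((σ i : ℝ) : ℂ)⁻¹) := by
    rw [hΩdef, Matrix.conjTranspose_mul, Matrix.diagonal_conjTranspose,
      star_ofReal_inv_vec]
  have hfuninv : (fun i => ((σ i : ℝ) : ℂ)⁻¹ * ((σ i : ℝ) : ℂ)⁻¹)
      = fun i => ((μ i : ℝ) : ℂ)⁻¹ := by
    funext i
    rw [← mul_inv, ← Complex.ofReal_mul, hσsq i]
  have hdiagμinv : Matrix.diagonal (fun i => ((σ i : ℝ) : ℂ)⁻¹)
      * Matrix.diagonal (fun i => ((σ i : ℝ) : ℂ)⁻¹)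
      = Matrix.diagonal (fun i => ((μ i : ℝ) : ℂ)⁻¹) := by
    rw [Matrix.diagonal_mul_diagonal, hfuninv]
  have hΩu : Ωᴴ * Ω = 1 := by
    rw [hΩH, hΩdef]
    calc Kᴴ * Matrix.diagonal (fun i => ((σ i : ℝ) : ℂ)⁻¹)
          * (Matrix.diagonal (fun i => ((σ i : ℝ) : ℂ)⁻¹) * K)
        = Kᴴ * Matrix.diagonal (fun i => ((μ i : ℝ) : ℂ)⁻¹) * K := by
          rw [mul_assoc, ← mul_assoc (Matrix.diagonal _), hdiagμinv, mul_assoc]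
      _ = Matrix.diagonal (fun i => ((μ i : ℝ) : ℂ)⁻¹) * (Kᴴ * K) := by
          rw [hcommd Kᴴ hKentH (fun x => ((x : ℝ) : ℂ)⁻¹)]
          noncomm_ring
      _ = 1 := by
          rw [hKHK, hDdef, Matrix.diagonal_mul_diagonal]
          rw [show (fun i => ((μ i : ℝ) : ℂ)⁻¹ * ((μ i : ℝ) : ℂ)) = fun _ => (1 : ℂ) from
            funext fun i => inv_mul_cancel₀ (by exact_mod_cast (hμpos i).ne')]
          exact Matrix.diagonal_one
  have hcommσinv : K * Matrix.diagonal (fun i => ((σ i : ℝ) : ℂ)⁻¹)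
      = Matrix.diagonal (fun i => ((σ i : ℝ) : ℂ)⁻¹) * K := by
    have := hcommd K hKent (fun x => ((Real.sqrt x : ℝ) : ℂ)⁻¹)
    simpa [hσdef] using this
  have hΩsym : Ωᵀ = Ω := by
    rw [hΩdef, Matrix.transpose_mul, Matrix.diagonal_transpose, hKsym, hcommσinv]
  have hfact : h = U * K * Uᵀ := by
    rw [hKdef]
    calc h = (U * Uᴴ) * h * ((Uᴴ)ᵀ * Uᵀ) := by rw [hU2, hTT1, one_mul, mul_one]
      _ = U * (Uᴴ * h * (Uᴴ)ᵀ) * Uᵀ := by noncomm_ring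
  -- eigenvalue bounds
  have hμcol : ∀ i, (qn ((fun k => U k i)) : ℝ) = 1 ∧ qn (hᴴ *ᵥ (fun k => U k i)) = μ i := by
    intro i
    set u : Fin n → ℂ := fun k => U k i with hu
    have hdotu : dotProduct (star u) u = ((1 : Matrix (Fin n) (Fin n) ℂ)) i i := by
      rw [← hU1, Matrix.mul_apply]
      simp [hu, Matrix.conjTranspose_apply, dotProduct]
    have hqnu : qn u = 1 := by
      have := hdotu
      rw [dot_self] at this
      rw [Matrix.one_apply_eq] at this
      exact_mod_cast this
    refine ⟨hqnu, ?_⟩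
    have hPu : P *ᵥ u = ((μ i : ℝ) : ℂ) • u := by
      ext k
      have h1 : (P *ᵥ u) k = (P * U) k i := by
        rw [Matrix.mul_apply, Matrix.mulVec, dotProduct]
      have h2 : P * U = U * D := by
        rw [hspec, mul_assoc, hU1, mul_one]
      rw [h1, h2, hDdef, Matrix.mul_diagonal]
      simp [hu, mul_comm]
    have := hdotP u
    rw [hPu, dotProduct_smul, hdotu, Matrix.one_apply_eq] at this
    have h3 : ((μ i : ℝ) : ℂ) = (qn (hᴴ *ᵥ u) : ℂ) := by
      rw [← this, smul_eq_mul, mul_one]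
    exact_mod_cast h3.symm
  have hHmulVec : ∀ x, hᴴ *ᵥ x = star (h *ᵥ star x) := by
    intro x
    ext k
    rw [Matrix.mulVec, dotProduct, Pi.star_apply, Matrix.mulVec, dotProduct,
      star_sum]
    refine Finset.sum_congr rfl fun j _ => ?_
    rw [Matrix.conjTranspose_apply, Pi.star_apply, star_mul', star_star]
    have hjk : h j k = h k j := by
      have := congrFun (congrFun hsym j) k
      simpa [Matrix.transpose_apply] using this.symm
    rw [hjk, mul_comm]
  have hHnorm : ∀ x, ‖hᴴ *ᵥ x‖ = ‖h *ᵥ star x‖ := by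
    intro x
    rw [hHmulVec, norm_star]
  have hstarnorm : ∀ x : Fin n → ℂ, ‖star x‖ = ‖x‖ := fun x => norm_star x
  have hμub : ∀ i, μ i ≤ (n : ℝ) * M ^ 2 := by
    intro i
    obtain ⟨hqnu, hqnμ⟩ := hμcol i
    set u : Fin n → ℂ := fun k => U k i with hu
    have h1 : qn (hᴴ *ᵥ u) ≤ (n : ℝ) * ‖hᴴ *ᵥ u‖ ^ 2 := qn_le_sq_norm _
    have h2 : ‖hᴴ *ᵥ u‖ ≤ M * ‖u‖ := by
      rw [hHnorm, ← hstarnorm u]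
      exact hM (star u)
    have h3 : ‖u‖ ^ 2 ≤ qn u := sq_norm_le_qn u
    have h4 : (0:ℝ) ≤ ‖hᴴ *ᵥ u‖ := norm_nonneg _
    have h5 : (0:ℝ) ≤ ‖u‖ := norm_nonneg _
    rw [hqnu] at h3
    have h6 : ‖hᴴ *ᵥ u‖ ^ 2 ≤ M ^ 2 * ‖u‖ ^ 2 := by nlinarith
    have h7 : (0:ℝ) ≤ (n:ℝ) := by linarith
    calc μ i = qn (hᴴ *ᵥ u) := hqnμ.symm
      _ ≤ (n:ℝ) * ‖hᴴ *ᵥ u‖ ^ 2 := h1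
      _ ≤ (n:ℝ) * (M ^ 2 * ‖u‖ ^ 2) := by nlinarith
      _ ≤ (n:ℝ) * (M ^ 2 * 1) := by
          have h8 := mul_le_mul_of_nonneg_left h3 (mul_nonneg h7 (sq_nonneg M))
          nlinarith [h8]
      _ = (n:ℝ) * M ^ 2 := by ring
  have hμlb : 0 < m → ∀ i, (m / n) ^ 2 ≤ μ i := by
    intro hm0 i
    obtain ⟨hqnu, hqnμ⟩ := hμcol i
    set u : Fin n → ℂ := fun k => U k i with hu
    have h1 : ‖hᴴ *ᵥ u‖ ^ 2 ≤ qn (hᴴ *ᵥ u) := sq_norm_le_qn _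
    have h2 : m * ‖u‖ ≤ ‖hᴴ *ᵥ u‖ := by
      rw [hHnorm, ← hstarnorm u]
      exact hm (star u)
    have h3 : qn u ≤ (n:ℝ) * ‖u‖ ^ 2 := qn_le_sq_norm u
    rw [hqnu] at h3
    have h5 : (0:ℝ) ≤ ‖u‖ := norm_nonneg _
    have hnpos : (0:ℝ) < n := by linarith
    have h6 : 1 / (n:ℝ) ≤ ‖u‖ ^ 2 := by
      rw [div_le_iff₀ hnpos] at *
      nlinarith
    have h7 : m ^ 2 * ‖u‖ ^ 2 ≤ ‖hᴴ *ᵥ u‖ ^ 2 := by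
      have h9 : m * ‖u‖ * (m * ‖u‖) ≤ ‖hᴴ *ᵥ u‖ * ‖hᴴ *ᵥ u‖ :=
        mul_le_mul h2 h2 (by positivity) (norm_nonneg _)
      nlinarith [h9]
    calc (m / n) ^ 2 = m ^ 2 * (1 / n) * (1 / n) := by field_simp
      _ ≤ m ^ 2 * (1/n) := by
          have h8 : (1:ℝ)/n ≤ 1 := by rw [div_le_one hnpos]; exact hn'
          have h9 : (0:ℝ) ≤ m ^ 2 * (1/n) := by positivity
          nlinarith
      _ ≤ m ^ 2 * ‖u‖ ^ 2 := by nlinarith [sq_nonneg m]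
      _ ≤ ‖hᴴ *ᵥ u‖ ^ 2 := h7
      _ ≤ qn (hᴴ *ᵥ u) := h1
      _ = μ i := hqnμ
  have hσub : ∀ i, σ i ≤ (n : ℝ) * s := by
    intro i
    have h1 := hμub i
    have h2 := hσsq i
    have h3 := (hσpos i).le
    refine le_of_sq_le_sq h3 (by positivity) ?_
    have h4 : M ^ 2 ≤ s ^ 2 := by nlinarith
    calc σ i ^ 2 = μ i := by rw [sq]; exact h2
      _ ≤ (n:ℝ) * M ^ 2 := h1
      _ ≤ (n:ℝ) * s ^ 2 := by nlinarith
      _ ≤ ((n:ℝ) * s) ^ 2 := by nlinarith [sq_nonneg s, hs.le]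
  have hσlb : 0 < m → ∀ i, m / n ≤ σ i := by
    intro hm0 i
    have h1 := hμlb hm0 i
    have h2 := hσsq i
    have h3 := (hσpos i).le
    have h0 : 0 < m / (n:ℝ) := by
      have : (0:ℝ) < n := by linarith
      positivity
    refine le_of_sq_le_sq h0.le h3 ?_
    rw [sq (σ i), h2]
    exact h1
  clear_value P U μ D K σ Ω
  -- the symmetric unitary matrix
  set Θ : Matrix (Fin n) (Fin n) ℂ := U * Ω * Uᵀ with hΘdef
  have hΘsym : Θᵀ = Θ := by
    rw [hΘdef, Matrix.transpose_mul, Matrix.transpose_mul, Matrix.transpose_transpose, hΩsym,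
      mul_assoc]
  have hΘu : Θᴴ * Θ = 1 := by
    rw [hΘdef]
    calc (U * Ω * Uᵀ)ᴴ * (U * Ω * Uᵀ) = (Uᵀ)ᴴ * (Ωᴴ * (Uᴴ * U) * Ω) * Uᵀ := by
          rw [Matrix.conjTranspose_mul, Matrix.conjTranspose_mul]
          noncomm_ring
      _ = (Uᵀ)ᴴ * Uᵀ := by rw [hU1, mul_one, hΩu, mul_one]
      _ = 1 := hUT
  obtain ⟨α, hα⟩ := exists_rot Θ
  set ζ : ℂ := Complex.exp ((α : ℂ) * Complex.I) with hζdef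
  have hζ1 : ‖ζ‖ = 1 := by
    rw [hζdef, Complex.norm_exp]
    simp
  set Z : Matrix (Fin n) (Fin n) ℂ := ζ • Θ with hZdef
  have hZsym : Zᵀ = Z := by rw [hZdef, Matrix.transpose_smul, hΘsym]
  have hζζ : star ζ * ζ = 1 := by
    rw [Complex.star_def, mul_comm, Complex.mul_conj']
    rw [hζ1]
    norm_num
  have hZu : Zᴴ * Z = 1 := by
    rw [hZdef, Matrix.conjTranspose_smul, Matrix.smul_mul, Matrix.mul_smul, smul_smul, hζζ,
      hΘu, one_smul]
  have h1Z : (1 + Z).det ≠ 0 := by rw [hZdef]; exact hα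
  -- basic determinant facts
  have hdetU : U.det ≠ 0 := by
    have hcd := congrArg Matrix.det hU1
    rw [Matrix.det_mul, Matrix.det_one] at hcd
    intro hc
    rw [hc, mul_zero] at hcd
    exact zero_ne_one hcd
  have hdetΩ : Ω.det ≠ 0 := by
    have hcd := congrArg Matrix.det hΩu
    rw [Matrix.det_mul, Matrix.det_one] at hcd
    intro hc
    rw [hc, mul_zero] at hcd
    exact zero_ne_one hcd
  -- Cayley path for Z, scaled by s
  obtain ⟨pc, hpc⟩ := cayley hZsym hZu h1Z
  have hsmulcont : Continuous fun x : Matrix (Fin n) (Fin n) ℂ => (s : ℂ) • x :=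
    continuous_const_smul _
  set psc : Path ((s:ℂ) • (1 : Matrix (Fin n) (Fin n) ℂ)) ((s:ℂ) • Z) :=
    pc.map hsmulcont with hpscdef
  -- piece 1 : from h to (s:ℂ) • Z
  set e : ℝ → Fin n → ℂ := fun t i =>
    Complex.exp ((((1-t) * Real.log (σ i) + t * Real.log s : ℝ) : ℂ)
      + ((t * α : ℝ) : ℂ) * Complex.I) with hedef
  clear_value Θ Z
  set A : ℝ → Matrix (Fin n) (Fin n) ℂ :=
    fun t => U * Matrix.diagonal (e t) * Ω * Uᵀ with hAdef
  have hecont : Continuous fun t : ℝ => e t := by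
    refine continuous_pi fun i => Complex.continuous_exp.comp ?_
    refine Continuous.add (Complex.continuous_ofReal.comp (by fun_prop)) ?_
    exact (Complex.continuous_ofReal.comp (by fun_prop)).mul continuous_const
  have hAcont : Continuous A := by
    rw [hAdef]
    exact ((continuous_const.matrix_mul hecont.matrix_diagonal).matrix_mul
      continuous_const).matrix_mul continuous_const
  have hA0 : A 0 = h := by
    have he0 : e 0 = fun i => ((σ i : ℝ) : ℂ) := by
      funext i
      rw [hedef]
      norm_num
      rw [← Complex.ofReal_exp, Real.exp_log (hσpos i)]
    show U * Matrix.diagonal (e 0) * Ω * Uᵀ = h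
    rw [he0, hΩdef, hfact]
    have hdd : Matrix.diagonal (fun i => ((σ i : ℝ) : ℂ))
        * Matrix.diagonal (fun i => ((σ i : ℝ) : ℂ)⁻¹) = 1 := by
      rw [Matrix.diagonal_mul_diagonal]
      rw [show (fun i => ((σ i : ℝ) : ℂ) * ((σ i : ℝ) : ℂ)⁻¹) = fun _ => (1:ℂ) from
        funext fun i => mul_inv_cancel₀ (by exact_mod_cast (hσpos i).ne')]
      exact Matrix.diagonal_one
    calc U * Matrix.diagonal (fun i => ((σ i : ℝ) : ℂ))
          * (Matrix.diagonal (fun i => ((σ i : ℝ) : ℂ)⁻¹) * K) * Uᵀ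
        = U * (Matrix.diagonal (fun i => ((σ i : ℝ) : ℂ))
            * Matrix.diagonal (fun i => ((σ i : ℝ) : ℂ)⁻¹)) * K * Uᵀ := by noncomm_ring
      _ = U * K * Uᵀ := by rw [hdd, mul_one]
  have hA1 : A 1 = (s : ℂ) • Z := by
    have he1 : e 1 = fun _ => (s : ℂ) * ζ := by
      funext i
      rw [hedef, hζdef]
      norm_num
      rw [Complex.exp_add, ← Complex.ofReal_exp, Real.exp_log hs]
    have hdc : Matrix.diagonal (fun _ : Fin n => (s : ℂ) * ζ)
        = ((s : ℂ) * ζ) • (1 : Matrix (Fin n) (Fin n) ℂ) := by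
      ext i j
      rcases eq_or_ne i j with rfl | hij
      · simp [Matrix.diagonal_apply_eq, Matrix.one_apply_eq]
      · simp [Matrix.diagonal_apply_ne _ hij, Matrix.one_apply_ne hij]
    show U * Matrix.diagonal (e 1) * Ω * Uᵀ = (s : ℂ) • Z
    rw [he1, hdc, hZdef, smul_smul]
    rw [Matrix.mul_smul, Matrix.smul_mul, Matrix.smul_mul, mul_one, hΘdef]
  -- commutation of the diagonal with K
  have hcommE : ∀ t : ℝ, K * Matrix.diagonal (e t) = Matrix.diagonal (e t) * K := by
    intro t
    have := hcommd K hKent (fun x =>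
      Complex.exp ((((1-t) * Real.log (Real.sqrt x) + t * Real.log s : ℝ) : ℂ)
        + ((t * α : ℝ) : ℂ) * Complex.I))
    simpa [hedef, hσdef] using this
  have hΩE : ∀ t : ℝ, Ω * Matrix.diagonal (e t) = Matrix.diagonal (e t) * Ω := by
    intro t
    rw [hΩdef, mul_assoc, hcommE t, ← mul_assoc, Matrix.diagonal_mul_diagonal,
      ← mul_assoc, Matrix.diagonal_mul_diagonal]
    rw [show (fun i => ((σ i : ℝ) : ℂ)⁻¹ * e t i) = (fun i => e t i * ((σ i : ℝ) : ℂ)⁻¹) from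
      funext fun i => mul_comm _ _]
  have hAsym : ∀ t : ℝ, (A t)ᵀ = A t := by
    intro t
    show (U * Matrix.diagonal (e t) * Ω * Uᵀ)ᵀ = U * Matrix.diagonal (e t) * Ω * Uᵀ
    rw [Matrix.transpose_mul, Matrix.transpose_mul, Matrix.transpose_mul,
      Matrix.transpose_transpose, Matrix.diagonal_transpose, hΩsym]
    calc U * (Ω * (Matrix.diagonal (e t) * Uᵀ))
        = U * ((Ω * Matrix.diagonal (e t)) * Uᵀ) := by noncomm_ring
      _ = U * ((Matrix.diagonal (e t) * Ω) * Uᵀ) := by rw [hΩE t]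
      _ = U * Matrix.diagonal (e t) * Ω * Uᵀ := by noncomm_ring
  have hAdet : ∀ t : ℝ, (A t).det ≠ 0 := by
    intro t
    show (U * Matrix.diagonal (e t) * Ω * Uᵀ).det ≠ 0
    rw [Matrix.det_mul, Matrix.det_mul, Matrix.det_mul, Matrix.det_diagonal,
      Matrix.det_transpose]
    refine mul_ne_zero (mul_ne_zero (mul_ne_zero hdetU ?_) hdetΩ) hdetU
    exact Finset.prod_ne_zero_iff.mpr fun i _ => Complex.exp_ne_zero _
  -- norm of the diagonal entries
  have hnorme : ∀ t i, ‖e t i‖ = Real.exp ((1-t) * Real.log (σ i) + t * Real.log s) := by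
    intro t i
    rw [hedef]
    rw [Complex.norm_exp]
    congr 1
    simp
  have heub : ∀ t ∈ Set.Icc (0:ℝ) 1, ∀ i, ‖e t i‖ ≤ (n : ℝ) * s := by
    intro t ht i
    rw [hnorme]
    have hns : (0:ℝ) < (n:ℝ) * s := by positivity
    have h1 : Real.log (σ i) ≤ Real.log ((n:ℝ) * s) :=
      Real.log_le_log (hσpos i) (hσub i)
    have h2 : Real.log s ≤ Real.log ((n:ℝ) * s) :=
      Real.log_le_log hs (by nlinarith)
    have h3 : (1-t) * Real.log (σ i) + t * Real.log s ≤ Real.log ((n:ℝ) * s) := by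
      obtain ⟨ht0, ht1⟩ := ht
      nlinarith
    calc Real.exp ((1-t) * Real.log (σ i) + t * Real.log s)
        ≤ Real.exp (Real.log ((n:ℝ) * s)) := Real.exp_le_exp.mpr h3
      _ = (n:ℝ) * s := Real.exp_log hns
  have helb : 0 < m → ∀ t ∈ Set.Icc (0:ℝ) 1, ∀ i, m / n ≤ ‖e t i‖ := by
    intro hm0 t ht i
    rw [hnorme]
    have hnr : (0:ℝ) < (n:ℝ) := by linarith
    have hmn : (0:ℝ) < m / n := by positivity
    have h1 : Real.log (m/n) ≤ Real.log (σ i) := Real.log_le_log hmn (hσlb hm0 i)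
    have h2 : Real.log (m/n) ≤ Real.log s := by
      refine Real.log_le_log hmn ?_
      calc m / n ≤ m := by
            rw [div_le_iff₀ hnr]
            nlinarith
        _ ≤ s := hms
    have h3 : Real.log (m/n) ≤ (1-t) * Real.log (σ i) + t * Real.log s := by
      obtain ⟨ht0, ht1⟩ := ht
      nlinarith
    calc m / n = Real.exp (Real.log (m/n)) := (Real.exp_log hmn).symm
      _ ≤ Real.exp ((1-t) * Real.log (σ i) + t * Real.log s) := Real.exp_le_exp.mpr h3
  have hAq : ∀ t : ℝ, ∀ v, qn (A t *ᵥ v) = ∑ i, ‖e t i‖ ^ 2 * ‖(Ω *ᵥ (Uᵀ *ᵥ v)) i‖ ^ 2 := by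
    intro t v
    show qn ((U * Matrix.diagonal (e t) * Ω * Uᵀ) *ᵥ v) = _
    rw [← Matrix.mulVec_mulVec, ← Matrix.mulVec_mulVec, ← Matrix.mulVec_mulVec,
      qn_mulVec_eq hU1, qn_mulVec_diagonal]
  have hqw : ∀ v, qn (Ω *ᵥ (Uᵀ *ᵥ v)) = qn v := by
    intro v
    rw [qn_mulVec_eq hΩu, qn_mulVec_eq hUT]
  have hAub : ∀ t ∈ Set.Icc (0:ℝ) 1, ∀ v, qn (A t *ᵥ v) ≤ ((n:ℝ) * s) ^ 2 * qn v := by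
    intro t ht v
    rw [hAq t v]
    calc ∑ i, ‖e t i‖ ^ 2 * ‖(Ω *ᵥ (Uᵀ *ᵥ v)) i‖ ^ 2
        ≤ ∑ i, ((n:ℝ) * s) ^ 2 * ‖(Ω *ᵥ (Uᵀ *ᵥ v)) i‖ ^ 2 := by
          refine Finset.sum_le_sum fun i _ => ?_
          have h1 := heub t ht i
          have h2 := norm_nonneg (e t i)
          have h3 : ‖e t i‖ ^ 2 ≤ ((n:ℝ) * s) ^ 2 := by nlinarith
          exact mul_le_mul_of_nonneg_right h3 (sq_nonneg _)
      _ = ((n:ℝ) * s) ^ 2 * qn (Ω *ᵥ (Uᵀ *ᵥ v)) := by rw [qn, Finset.mul_sum]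
      _ = ((n:ℝ) * s) ^ 2 * qn v := by rw [hqw v]
  have hAlb : 0 < m → ∀ t ∈ Set.Icc (0:ℝ) 1, ∀ v,
      (m / n) ^ 2 * qn v ≤ qn (A t *ᵥ v) := by
    intro hm0 t ht v
    rw [hAq t v]
    have hmn : (0:ℝ) ≤ m / n := by
      have : (0:ℝ) < (n:ℝ) := by linarith
      positivity
    calc (m / n) ^ 2 * qn v = (m / n) ^ 2 * qn (Ω *ᵥ (Uᵀ *ᵥ v)) := by rw [hqw v]
      _ = ∑ i, (m / n) ^ 2 * ‖(Ω *ᵥ (Uᵀ *ᵥ v)) i‖ ^ 2 := by rw [qn, Finset.mul_sum]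
      _ ≤ ∑ i, ‖e t i‖ ^ 2 * ‖(Ω *ᵥ (Uᵀ *ᵥ v)) i‖ ^ 2 := by
          refine Finset.sum_le_sum fun i _ => ?_
          have h1 := helb hm0 t ht i
          have hmn2 : (0:ℝ) ≤ m / n := by
            have : (0:ℝ) < (n:ℝ) := by linarith
            positivity
          have h3 : (m / n) ^ 2 ≤ ‖e t i‖ ^ 2 := by nlinarith
          exact mul_le_mul_of_nonneg_right h3 (sq_nonneg _)
  -- assemble the path
  set p1 : Path h ((s:ℂ) • Z) :=
    ⟨⟨fun t => A (t : ℝ), hAcont.comp continuous_subtype_val⟩, hA0, hA1⟩ with hp1def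
  refine ⟨p1.trans psc.symm, ?_⟩
  intro x hx
  rw [Path.trans_range] at hx
  rcases hx with hx | hx
  · obtain ⟨t, rfl⟩ := hx
    have ht : (t : ℝ) ∈ Set.Icc (0:ℝ) 1 := ⟨t.2.1, t.2.2⟩
    refine ⟨hAsym t, hAdet t, hAub t ht, fun hm0 => hAlb hm0 t ht⟩
  · rw [Path.symm_range] at hx
    obtain ⟨t, rfl⟩ := hx
    have hy : (psc t) = (s : ℂ) • (pc t) := by
      rw [hpscdef]
      simp [Path.map_coe]
    obtain ⟨hys, hyd, hyq⟩ := hpc (pc t) ⟨t, rfl⟩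
    rw [hy]
    have hsC : ((s : ℂ)) ≠ 0 := by exact_mod_cast hs.ne'
    have hnorms : ‖(s:ℂ)‖ = s := by
      rw [Complex.norm_real, Real.norm_eq_abs, abs_of_pos hs]
    refine ⟨?_, ?_, ?_, ?_⟩
    · rw [Matrix.transpose_smul, hys]
    · rw [Matrix.det_smul]
      exact mul_ne_zero (pow_ne_zero _ hsC) hyd
    · intro v
      rw [Matrix.smul_mulVec, qn_smul, hyq v, hnorms]
      have h1 := qn_nonneg v
      have h2 : s ^ 2 ≤ ((n:ℝ) * s) ^ 2 := by
        have hnn : (1:ℝ) ≤ (n:ℝ) ^ 2 := by nlinarith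
        calc s ^ 2 = 1 * s ^ 2 := by ring
          _ ≤ (n:ℝ) ^ 2 * s ^ 2 := mul_le_mul_of_nonneg_right hnn (sq_nonneg s)
          _ = ((n:ℝ) * s) ^ 2 := by ring
      exact mul_le_mul_of_nonneg_right h2 h1
    · intro hm0 v
      rw [Matrix.smul_mulVec, qn_smul, hyq v, hnorms]
      have h1 := qn_nonneg v
      have hnr : (0:ℝ) < (n:ℝ) := by linarith
      have h2 : m / n ≤ s := by
        have hmm : m / n ≤ m := by
          rw [div_le_iff₀ hnr]
          calc m = m * 1 := by ring
            _ ≤ m * n := mul_le_mul_of_nonneg_left hn' hm0.le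
        linarith
      have hmn : (0:ℝ) ≤ m / n := by positivity
      have h3 : (m / n) ^ 2 ≤ s ^ 2 := pow_le_pow_left₀ hmn h2 2
      exact mul_le_mul_of_nonneg_right h3 h1


lemma norms_of_qn {n : ℕ} (hn : 1 ≤ n) {A : Matrix (Fin n) (Fin n) ℂ} {s m : ℝ}
    (hs : 0 ≤ s)
    (hub : ∀ v, qn (A *ᵥ v) ≤ ((n:ℝ) * s) ^ 2 * qn v)
    (hlb : 0 < m → ∀ v, (m / n) ^ 2 * qn v ≤ qn (A *ᵥ v)) :
    (∀ v, ‖A *ᵥ v‖ ≤ ((n:ℝ)+1)^2 * s * ‖v‖) ∧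
    (∀ v, (((n:ℝ)+1)^2)⁻¹ * m * ‖v‖ ≤ ‖A *ᵥ v‖) := by
  have hn' : (1:ℝ) ≤ (n:ℝ) := by exact_mod_cast hn
  constructor
  · intro v
    refine le_of_sq_le_sq (norm_nonneg _) (by positivity) ?_
    have h1 : ‖A *ᵥ v‖ ^ 2 ≤ qn (A *ᵥ v) := sq_norm_le_qn _
    have h2 := hub v
    have h3 : qn v ≤ (n:ℝ) * ‖v‖^2 := qn_le_sq_norm v
    have h5 : ((n:ℝ)*s)^2 * qn v ≤ ((n:ℝ)*s)^2 * ((n:ℝ)*‖v‖^2) :=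
      mul_le_mul_of_nonneg_left h3 (sq_nonneg _)
    have h6 : (n:ℝ)^2 * (n:ℝ) ≤ (((n:ℝ)+1)^2)^2 := by nlinarith
    calc ‖A *ᵥ v‖ ^ 2 ≤ ((n:ℝ)*s)^2 * ((n:ℝ)*‖v‖^2) := by linarith
      _ = ((n:ℝ)^2 * (n:ℝ)) * (s^2 * ‖v‖^2) := by ring
      _ ≤ (((n:ℝ)+1)^2)^2 * (s^2 * ‖v‖^2) := mul_le_mul_of_nonneg_right h6 (by positivity)
      _ = (((n:ℝ)+1)^2 * s * ‖v‖)^2 := by ring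
  · intro v
    rcases le_or_gt m 0 with hm | hm
    · have h0 : (((n:ℝ)+1)^2)⁻¹ * m * ‖v‖ ≤ 0 := by
        have hpos : (0:ℝ) ≤ ((((n:ℝ)+1)^2)⁻¹ : ℝ) := by positivity
        have hv := norm_nonneg v
        have := mul_nonneg hpos hv
        nlinarith
      exact le_trans h0 (norm_nonneg _)
    · refine le_of_sq_le_sq (by positivity) (norm_nonneg _) ?_
      have h1 := hlb hm v
      have h2 : qn (A *ᵥ v) ≤ (n:ℝ) * ‖A *ᵥ v‖^2 := qn_le_sq_norm _
      have h3 : ‖v‖^2 ≤ qn v := sq_norm_le_qn v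
      have hnpos : (0:ℝ) < (n:ℝ) := by linarith
      have h4 : (m/n)^2 * ‖v‖^2 ≤ (n:ℝ) * ‖A *ᵥ v‖^2 := by
        have := mul_le_mul_of_nonneg_left h3 (sq_nonneg (m/(n:ℝ)))
        linarith
      have e1 : m^2 * ‖v‖^2 ≤ (n:ℝ)^3 * ‖A *ᵥ v‖^2 := by
        have h6 := mul_le_mul_of_nonneg_right h4 (sq_nonneg (n:ℝ))
        have h7 : (m/n)^2 * ‖v‖^2 * (n:ℝ)^2 = m^2 * ‖v‖^2 := by
          field_simp
        nlinarith [h6]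
      have h8 : (n:ℝ)^3 ≤ ((n:ℝ)+1)^4 := by
        calc (n:ℝ)^3 ≤ ((n:ℝ)+1)^3 := by
              refine pow_le_pow_left₀ (by linarith) (by linarith) 3
          _ ≤ ((n:ℝ)+1)^4 := pow_le_pow_right₀ (by linarith) (by norm_num)
      have key : m^2 * ‖v‖^2 ≤ ((n:ℝ)+1)^4 * ‖A *ᵥ v‖^2 := by
        have h9 := mul_le_mul_of_nonneg_right h8 (sq_nonneg (‖A *ᵥ v‖))
        linarith
      have hsq : ((((n:ℝ)+1)^2)⁻¹ * m * ‖v‖)^2 = (m^2 * ‖v‖^2) / ((n:ℝ)+1)^4 := by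
        field_simp
      rw [hsq, div_le_iff₀ (by positivity : (0:ℝ) < ((n:ℝ)+1)^4)]
      linarith

end Stmt3Aux

open Matrix Complex Stmt3Aux in
/-- The space of nondegenerate complex quadratic forms on `ℂ^n`
(identified with invertible symmetric `n×n` complex matrices) is
path-connected; moreover any two nondegenerate forms `h₀, h₁` are joined by a
path `h t` of nondegenerate forms whose operator norms (`‖h t * v‖ ≤ ... * ‖v‖`)
and smallest singular values (`... * ‖v‖ ≤ ‖h t * v‖`) are controlled, in terms
of those of `h₀` and `h₁`, by constants `c, C > 0` depending only on `n`. -/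
theorem stmt3 (n : ℕ) :
    ∃ c C : ℝ, 0 < c ∧ 0 < C ∧
      ∀ h₀ h₁ : Matrix (Fin n) (Fin n) ℂ,
        h₀.transpose = h₀ → h₁.transpose = h₁ → IsUnit h₀.det → IsUnit h₁.det →
        ∀ M₀ M₁ m₀ m₁ : ℝ,
          (∀ v : Fin n → ℂ, ‖h₀.mulVec v‖ ≤ M₀ * ‖v‖) →
          (∀ v : Fin n → ℂ, ‖h₁.mulVec v‖ ≤ M₁ * ‖v‖) →
          (∀ v : Fin n → ℂ, m₀ * ‖v‖ ≤ ‖h₀.mulVec v‖) →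
          (∀ v : Fin n → ℂ, m₁ * ‖v‖ ≤ ‖h₁.mulVec v‖) →
          ∃ h : ℝ → Matrix (Fin n) (Fin n) ℂ,
            Continuous h ∧ h 0 = h₀ ∧ h 1 = h₁ ∧
            ∀ t ∈ Set.Icc (0 : ℝ) 1,
              (h t).transpose = h t ∧ IsUnit (h t).det ∧
              (∀ v : Fin n → ℂ, ‖(h t).mulVec v‖ ≤ C * max M₀ M₁ * ‖v‖) ∧
              (∀ v : Fin n → ℂ, c * min m₀ m₁ * ‖v‖ ≤ ‖(h t).mulVec v‖) := by
  classical
  refine ⟨(((n:ℝ)+1)^2)⁻¹, ((n:ℝ)+1)^2, by positivity, by positivity, ?_⟩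
  intro h₀ h₁ hs0 hs1 hd0 hd1 M₀ M₁ m₀ m₁ hM₀ hM₁ hm₀ hm₁
  rcases Nat.eq_zero_or_pos n with hn0 | hn
  · -- trivial case `n = 0`
    subst hn0
    refine ⟨fun _ => h₀, continuous_const, rfl, Subsingleton.elim _ _, ?_⟩
    intro t _
    have hv0 : ∀ w : Fin 0 → ℂ, ‖w‖ = 0 := fun w => by
      rw [Subsingleton.elim w 0, norm_zero]
    refine ⟨Subsingleton.elim _ _, ?_, ?_, ?_⟩
    · rw [Matrix.det_isEmpty]; exact isUnit_one
    · intro v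
      rw [hv0 (h₀.mulVec v), hv0 v, mul_zero]
    · intro v
      rw [hv0 (h₀.mulVec v), hv0 v, mul_zero]
  · -- main case `n ≥ 1`
    have hn' : (1:ℝ) ≤ (n:ℝ) := by exact_mod_cast hn
    set s : ℝ := max M₀ M₁ with hsdef
    set m : ℝ := min m₀ m₁ with hmdef
    -- a nonzero vector
    set w₀ : Fin n → ℂ := Pi.single (⟨0, hn⟩ : Fin n) (1:ℂ) with hw₀def
    have hw₀ : w₀ ≠ 0 := by
      intro hc
      have := congrFun hc (⟨0, hn⟩ : Fin n)
      rw [hw₀def] at this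
      simp at this
    have hw₀n : 0 < ‖w₀‖ := norm_pos_iff.mpr hw₀
    have hMpos : ∀ (B : Matrix (Fin n) (Fin n) ℂ) (M mm : ℝ), IsUnit B.det →
        (∀ v : Fin n → ℂ, ‖B *ᵥ v‖ ≤ M * ‖v‖) → (∀ v : Fin n → ℂ, mm * ‖v‖ ≤ ‖B *ᵥ v‖) →
        0 < M ∧ mm ≤ M := by
      intro B M mm hd hM hm
      have hne : B *ᵥ w₀ ≠ 0 := by
        intro hc
        have hdet0 : B.det = 0 := (Matrix.exists_mulVec_eq_zero_iff).1 ⟨w₀, hw₀, hc⟩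
        rw [hdet0] at hd
        simp at hd
      have h1 : 0 < ‖B *ᵥ w₀‖ := norm_pos_iff.mpr hne
      have h2 := hM w₀
      have h3 := hm w₀
      constructor
      · nlinarith
      · have := le_trans h3 h2
        exact le_of_mul_le_mul_right this hw₀n
    obtain ⟨hM₀pos, hm₀M₀⟩ := hMpos h₀ M₀ m₀ hd0 hM₀ hm₀
    obtain ⟨hM₁pos, hm₁M₁⟩ := hMpos h₁ M₁ m₁ hd1 hM₁ hm₁
    have hs : 0 < s := lt_of_lt_of_le hM₀pos (le_max_left _ _)
    have hms : m ≤ s := by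
      have : m ≤ m₀ := min_le_left _ _
      have : m ≤ M₀ := le_trans this hm₀M₀
      exact le_trans this (le_max_left _ _)
    have hmlow : ∀ (B : Matrix (Fin n) (Fin n) ℂ) (mm : ℝ), m ≤ mm →
        (∀ v : Fin n → ℂ, mm * ‖v‖ ≤ ‖B *ᵥ v‖) →
        (∀ v : Fin n → ℂ, m * ‖v‖ ≤ ‖B *ᵥ v‖) := by
      intro B mm hle hm v
      refine le_trans ?_ (hm v)
      exact mul_le_mul_of_nonneg_right hle (norm_nonneg _)
    obtain ⟨γ₀, hγ₀⟩ := side hn h₀ hs0 (isUnit_iff_ne_zero.mp hd0) s M₀ m hs hM₀pos.le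
      (le_max_left _ _) hms hM₀ (hmlow h₀ m₀ (min_le_left _ _) hm₀)
    obtain ⟨γ₁, hγ₁⟩ := side hn h₁ hs1 (isUnit_iff_ne_zero.mp hd1) s M₁ m hs hM₁pos.le
      (le_max_right _ _) hms hM₁ (hmlow h₁ m₁ (min_le_right _ _) hm₁)
    set γ : Path h₀ h₁ := γ₀.trans γ₁.symm with hγdef
    refine ⟨fun t => γ (Set.projIcc 0 1 zero_le_one t), ?_, ?_, ?_, ?_⟩
    · exact γ.continuous.comp continuous_projIcc
    · show γ (Set.projIcc 0 1 zero_le_one 0) = h₀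
      rw [Set.projIcc_left]
      exact γ.source
    · show γ (Set.projIcc 0 1 zero_le_one 1) = h₁
      rw [Set.projIcc_right]
      exact γ.target
    · intro t _
      have hmem : γ (Set.projIcc 0 1 zero_le_one t) ∈ Set.range γ := Set.mem_range_self _
      rw [hγdef, Path.trans_range] at hmem
      have hx : ∀ x : Matrix (Fin n) (Fin n) ℂ,
          (xᵀ = x ∧ x.det ≠ 0 ∧ (∀ v, qn (x *ᵥ v) ≤ ((n:ℝ) * s) ^ 2 * qn v) ∧
            (0 < m → ∀ v, (m / n) ^ 2 * qn v ≤ qn (x *ᵥ v))) →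
          (xᵀ = x ∧ IsUnit x.det ∧
            (∀ v : Fin n → ℂ, ‖x *ᵥ v‖ ≤ ((n:ℝ)+1)^2 * max M₀ M₁ * ‖v‖) ∧
            (∀ v : Fin n → ℂ, (((n:ℝ)+1)^2)⁻¹ * min m₀ m₁ * ‖v‖ ≤ ‖x *ᵥ v‖)) := by
        rintro x ⟨hxs, hxd, hxu, hxl⟩
        obtain ⟨hup, hlo⟩ := norms_of_qn hn hs.le hxu hxl
        exact ⟨hxs, isUnit_iff_ne_zero.mpr hxd, hup, hlo⟩
      rcases hmem with hmem | hmem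
      · obtain ⟨hxs, hxd, hxu, hxl⟩ := hγ₀ _ hmem
        exact hx _ ⟨hxs, hxd, hxu, hxl⟩
      · rw [Path.symm_range] at hmem
        obtain ⟨hxs, hxd, hxu, hxl⟩ := hγ₁ _ hmem
        exact hx _ ⟨hxs, hxd, hxu, hxl⟩
end Stmt3Aux
end
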